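/- arXiv:2309.06669 — 2 statements merged into one kernel-verified Lean document; each statement's English description precedes it below -/
import Mathlib

section
/- Every countable 2-connected graph with at least three vertices admits an ear decomposition: a sequence (G_n) of subgraphs with G_0 a cycle, each G_n either equal to G_{n-1} or obtained from G_{n-1} by adding a path (an 'ear') joining two distinct vertices of G_{n-1} and internally disjoint from G_{n-1}, whose union is G. -/
open SimpleGraph

/-- A graph is 2-connected: connected, has at least 3 vertices, and deleting
any single vertex leaves it connected. -/
def TwoConnected {V : Type*} (G : SimpleGraph V) : Prop :=
  G.Connected ∧ (∃ a b c : V, a ≠ b ∧ a ≠ c ∧ b ≠ c) ∧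
    ∀ v : V, ((⊤ : G.Subgraph).deleteVerts {v}).coe.Connected

/-- A cycle: a finite connected 2-regular (nonempty) subgraph. -/
def IsCycleSubgraph {V : Type*} (G : SimpleGraph V) (C : G.Subgraph) : Prop :=
  C.verts.Finite ∧ C.verts.Nonempty ∧ C.coe.Connected ∧
    ∀ v ∈ C.verts, (C.neighborSet v).ncard = 2

/-- `B` is obtained from `A` by adding an ear: a path joining two distinct
vertices of `A`, internally disjoint from `A`. -/
def IsEarStep {V : Type*} (G : SimpleGraph V) (A B : G.Subgraph) : Prop :=
  ∃ (x y : V) (p : G.Walk x y), x ≠ y ∧ p.IsPath ∧ x ∈ A.verts ∧ y ∈ A.verts ∧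
    (∀ v ∈ p.support, v ≠ x → v ≠ y → v ∉ A.verts) ∧ B = A ⊔ p.toSubgraph

/-- `G` is a minor of `H`: there are pairwise disjoint nonempty connected
branch sets in `H`, one for each vertex of `G`, with an `H`-edge between the
branch sets of any two `G`-adjacent vertices. -/
def IsMinor {V : Type u} {W : Type v} (G : SimpleGraph V) (H : SimpleGraph W) : Prop :=
  ∃ φ : V → Set W,
    (∀ a, (φ a).Nonempty) ∧
    (∀ a, (H.induce (φ a)).Connected) ∧
    (Pairwise fun a b => Disjoint (φ a) (φ b)) ∧
    ∀ a b, G.Adj a b → ∃ x ∈ φ a, ∃ y ∈ φ b, H.Adj x y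


section EarAuxSec



variable {V : Type*} {G : SimpleGraph V}

/-- A path from a vertex to itself is nil. -/
lemma EarAux.isPath_loop_eq_nil {v : V} (p : G.Walk v v) (hp : p.IsPath) : p = Walk.nil := by
  cases p with
  | nil => rfl
  | cons h q =>
    exfalso
    rw [Walk.cons_isPath_iff] at hp
    exact hp.2 q.end_mem_support

/-- The end of a nontrivial path has a unique neighbor in its subgraph. -/
lemma EarAux.path_end_neighborSet {a b : V} (p : G.Walk a b) (hp : p.IsPath) (hab : a ≠ b) :
    ∃ x, s(b, x) ∈ p.edges ∧ p.toSubgraph.neighborSet b = {x} := by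
  classical
  induction p with
  | nil => exact absurd rfl hab
  | @cons a a' b h q ih =>
    rw [Walk.cons_isPath_iff] at hp
    by_cases ha'b : a' = b
    · subst ha'b
      have : q = Walk.nil := EarAux.isPath_loop_eq_nil q hp.1
      subst this
      refine ⟨a, by simp [Sym2.eq_swap], ?_⟩
      simp only [Walk.toSubgraph, Subgraph.neighborSet_sup, neighborSet_subgraphOfAdj,
        neighborSet_singletonSubgraph]
      simp [Ne.symm hab]
    · obtain ⟨x, hx, hxs⟩ := ih hp.1 ha'b
      have hba : b ≠ a := fun hba => hp.2 (hba ▸ q.end_mem_support)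
      refine ⟨x, by simp [hx], ?_⟩
      rw [Walk.toSubgraph, Subgraph.neighborSet_sup, hxs, neighborSet_subgraphOfAdj]
      simp [hba, ha'b, Ne.symm ha'b]


lemma EarAux.cycle_start_ncard {v : V} (c : G.Walk v v) (hc : c.IsCycle) :
    (c.toSubgraph.neighborSet v).ncard = 2 := by
  classical
  cases c with
  | nil => exact absurd rfl hc.ne_nil
  | @cons _ w _ h q =>
    rw [Walk.cons_isCycle_iff] at hc
    obtain ⟨hq, he⟩ := hc
    have hwv : w ≠ v := h.ne'
    obtain ⟨x, hx, hxs⟩ := EarAux.path_end_neighborSet (a := w) (b := v) q hq hwv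
    have hwx : w ≠ x := by
      rintro rfl
      exact he hx
    rw [Walk.toSubgraph, Subgraph.neighborSet_sup, hxs, neighborSet_subgraphOfAdj]
    rw [if_pos rfl, if_neg h.ne, Set.union_empty]
    exact Set.ncard_pair hwx

lemma EarAux.cycle_regular {u : V} (c : G.Walk u u) (hc : c.IsCycle) {v : V}
    (hv : v ∈ c.support) : (c.toSubgraph.neighborSet v).ncard = 2 := by
  classical
  rw [← c.toSubgraph_rotate hv]
  exact EarAux.cycle_start_ncard (c.rotate v hv) (hc.rotate hv)

/-- First-hit: truncate a path at the first vertex lying in `S`. -/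
lemma EarAux.exists_firsthit {u w : V} (p : G.Walk u w) (hp : p.IsPath) (S : Set V)
    (hw : w ∈ S) :
    ∃ x ∈ S, ∃ q : G.Walk u x, q.IsPath ∧ (∀ z ∈ q.support, z ∈ p.support) ∧
      ∀ z ∈ q.support, z ≠ x → z ∉ S := by
  induction p with
  | nil =>
    refine ⟨_, hw, Walk.nil, by simp, by simp, ?_⟩
    intro z hz hzu
    simp only [Walk.support_nil, List.mem_singleton] at hz
    exact absurd hz hzu
  | @cons a a' b h q ih =>
    rw [Walk.cons_isPath_iff] at hp
    by_cases haS : a ∈ S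
    · refine ⟨a, haS, Walk.nil, by simp, by simp, ?_⟩
      intro z hz hzu
      simp only [Walk.support_nil, List.mem_singleton] at hz
      exact absurd hz hzu
    · obtain ⟨x, hxS, r, hr, hrsub, hrnin⟩ := ih hp.1 hw
      have haR : a ∉ r.support := fun hmem => hp.2 (hrsub a hmem)
      refine ⟨x, hxS, Walk.cons h r, (Walk.cons_isPath_iff h r).2 ⟨hr, haR⟩, ?_, ?_⟩
      · intro z hz
        rw [Walk.support_cons, List.mem_cons] at hz ⊢
        exact hz.imp id (hrsub z)
      · intro z hz hzx
        rw [Walk.support_cons, List.mem_cons] at hz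
        rcases hz with rfl | hz
        · exact haS
        · exact hrnin z hz hzx

/-- Adding a single edge between two vertices of `A` is an ear step. -/
lemma EarAux.ear_edge (A : G.Subgraph) {u v : V} (hu : u ∈ A.verts) (hv : v ∈ A.verts)
    (huv : G.Adj u v) :
    ∃ B : G.Subgraph, IsEarStep G A B ∧ A ≤ B ∧ B.Adj u v := by
  let p : G.Walk u v := Walk.cons huv Walk.nil
  have hp : p.IsPath := by
    rw [Walk.cons_isPath_iff]
    simpa using huv.ne
  refine ⟨A ⊔ p.toSubgraph, ⟨u, v, p, huv.ne, hp, hu, hv, ?_, rfl⟩, le_sup_left, ?_⟩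
  · intro z hz hzu hzv
    simp only [p, Walk.support_cons, Walk.support_nil, List.mem_cons, List.mem_singleton] at hz
    rcases hz with rfl | rfl | h
    · exact absurd rfl hzu
    · exact absurd rfl hzv
    · exact absurd h (by simp)
  · apply Subgraph.sup_adj.2
    right
    simp [p, Walk.toSubgraph]

end EarAuxSec

section EarAuxSec2
variable {V : Type*} {G : SimpleGraph V}

/-- Attach an ear through a pendant edge `u–v` with `u ∈ A`, `v ∉ A`. -/
lemma EarAux.ear_attach (hG : TwoConnected G) (A : G.Subgraph) {u v a : V}
    (hu : u ∈ A.verts) (ha : a ∈ A.verts) (hau : a ≠ u) (huv : G.Adj u v)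
    (hv : v ∉ A.verts) :
    ∃ B : G.Subgraph, IsEarStep G A B ∧ A ≤ B ∧ B.Adj u v := by
  classical
  have hdel := hG.2.2 u
  set D := ((⊤ : G.Subgraph).deleteVerts {u}) with hD
  have hDv : ∀ z : V, z ∈ D.verts ↔ z ≠ u := by
    intro z
    simp [hD, Subgraph.deleteVerts_verts]
  obtain ⟨W⟩ := hdel.preconnected ⟨v, (hDv v).2 huv.ne'⟩ ⟨a, (hDv a).2 hau⟩
  let P0 : G.Walk v a := W.map D.hom
  have hP0 : ∀ z ∈ P0.support, z ≠ u := by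
    intro z hz
    rw [show P0.support = _ from Walk.support_map (f := D.hom) (p := W), List.mem_map] at hz
    obtain ⟨⟨z', hz'⟩, _, rfl⟩ := hz
    exact (hDv z').1 hz'
  let P := P0.bypass
  have hPsup : ∀ z ∈ P.support, z ≠ u := fun z hz => hP0 z (P0.support_bypass_subset hz)
  obtain ⟨x, hxA, q, hq, hqsub, hqnin⟩ :=
    EarAux.exists_firsthit P P0.bypass_isPath A.verts ha
  have hqu : ∀ z ∈ q.support, z ≠ u := fun z hz => hPsup z (hqsub z hz)
  have hxu : x ≠ u := hqu x q.end_mem_support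
  let p := Walk.cons huv q
  have hp : p.IsPath := by
    rw [Walk.cons_isPath_iff]
    exact ⟨hq, fun hmem => hqu u hmem rfl⟩
  refine ⟨A ⊔ p.toSubgraph, ⟨u, x, p, hxu.symm, hp, hu, hxA, ?_, rfl⟩, le_sup_left, ?_⟩
  · intro z hz hzu hzx
    simp only [p, Walk.support_cons, List.mem_cons] at hz
    rcases hz with rfl | hz
    · exact absurd rfl hzu
    · intro hzA
      rcases eq_or_ne z x with rfl | hzx'
      · exact hzx rfl
      · exact hqnin z hz hzx' hzA
  · apply Subgraph.sup_adj.2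
    right
    apply Subgraph.sup_adj.2
    left
    simp

/-- In a 2-connected graph every vertex has two distinct neighbors. -/
lemma EarAux.two_neighbors (hG : TwoConnected G) (u : V) :
    ∃ v w : V, v ≠ w ∧ G.Adj u v ∧ G.Adj u w := by
  classical
  obtain ⟨a, b, c, hab, hac, hbc⟩ := hG.2.1
  -- some vertex distinct from u
  have hz : ∃ z : V, z ≠ u := by
    rcases eq_or_ne a u with rfl | h
    · exact ⟨b, hab.symm⟩
    · exact ⟨a, h⟩
  obtain ⟨z, hzu⟩ := hz
  -- first neighbor
  obtain ⟨p⟩ := hG.1.preconnected u z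
  have hv : ∃ v : V, G.Adj u v := by
    cases p with
    | nil => exact absurd rfl hzu
    | cons h _ => exact ⟨_, h⟩
  obtain ⟨v, huv⟩ := hv
  -- a vertex distinct from u and v
  have hz2 : ∃ z : V, z ≠ u ∧ z ≠ v := by
    by_contra hcon
    push_neg at hcon
    have ha' := hcon a
    have hb' := hcon b
    have hc' := hcon c
    rcases eq_or_ne a u with ha1 | ha1
    · rcases eq_or_ne b u with hb1 | hb1
      · exact hab (ha1.trans hb1.symm)
      · have hbv := hb' hb1
        rcases eq_or_ne c u with hc1 | hc1
        · exact hac (ha1.trans hc1.symm)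
        · exact hbc (hbv.trans (hc' hc1).symm)
    · have hav := ha' ha1
      rcases eq_or_ne b u with hb1 | hb1
      · rcases eq_or_ne c u with hc1 | hc1
        · exact hbc (hb1.trans hc1.symm)
        · exact hac (hav.trans (hc' hc1).symm)
      · exact hab (hav.trans (hb' hb1).symm)
  obtain ⟨z2, hz2u, hz2v⟩ := hz2
  have hdel := hG.2.2 v
  set D := ((⊤ : G.Subgraph).deleteVerts {v}) with hD
  have hDm : ∀ y : V, y ∈ D.verts ↔ y ≠ v := by
    intro y; simp [hD, Subgraph.deleteVerts_verts]
  obtain ⟨W⟩ := hdel.preconnected ⟨u, (hDm u).2 huv.ne⟩ ⟨z2, (hDm z2).2 hz2v⟩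
  have hne : (⟨u, (hDm u).2 huv.ne⟩ : D.verts) ≠ ⟨z2, (hDm z2).2 hz2v⟩ := by
    intro hcon
    exact hz2u (congrArg Subtype.val hcon).symm
  have hadj : D.coe.Adj ⟨u, (hDm u).2 huv.ne⟩ (W.getVert 1) :=
    W.adj_snd (Walk.not_nil_of_ne hne)
  rw [Subgraph.coe_adj] at hadj
  refine ⟨v, (W.getVert 1 : D.verts), ?_, huv, ?_⟩
  · intro hcon
    exact (hDm _).1 (W.getVert 1).2 hcon.symm
  · exact D.adj_sub hadj


/-- Every 2-connected graph contains a cycle subgraph, with two distinct vertices. -/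
lemma EarAux.exists_cycle (hG : TwoConnected G) :
    ∃ C : G.Subgraph, IsCycleSubgraph G C ∧ ∃ b c : V, b ∈ C.verts ∧ c ∈ C.verts ∧ b ≠ c := by
  classical
  obtain ⟨a0, _, _, _, _, _⟩ := hG.2.1
  obtain ⟨v, w, hvw, huv, huw⟩ := EarAux.two_neighbors hG a0
  set u := a0 with hu
  have hdel := hG.2.2 u
  set D := ((⊤ : G.Subgraph).deleteVerts {u}) with hD
  have hDm : ∀ z : V, z ∈ D.verts ↔ z ≠ u := by
    intro z; simp [hD, Subgraph.deleteVerts_verts]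
  obtain ⟨W⟩ := hdel.preconnected ⟨v, (hDm v).2 huv.ne'⟩ ⟨w, (hDm w).2 huw.ne'⟩
  let P0 : G.Walk v w := W.map D.hom
  have hP0 : ∀ z ∈ P0.support, z ≠ u := by
    intro z hz
    rw [show P0.support = _ from Walk.support_map (f := D.hom) (p := W), List.mem_map] at hz
    obtain ⟨⟨z', hz'⟩, _, rfl⟩ := hz
    exact (hDm z').1 hz'
  let P := P0.bypass
  have hPp : P.IsPath := P0.bypass_isPath
  have hPsup : ∀ z ∈ P.support, z ≠ u := fun z hz => hP0 z (P0.support_bypass_subset hz)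
  have huP : u ∉ P.support := fun hmem => hPsup u hmem rfl
  let Q : G.Walk v u := P.concat huw.symm
  have hQ : Q.IsPath := by
    rw [← Walk.isPath_reverse_iff, Walk.reverse_concat, Walk.cons_isPath_iff]
    exact ⟨(Walk.isPath_reverse_iff P).2 hPp,
      fun hmem => huP (by rwa [Walk.support_reverse, List.mem_reverse] at hmem)⟩
  have hQe : s(u, v) ∉ Q.edges := by
    intro hmem
    rw [Walk.edges_concat, List.concat_eq_append, List.mem_append] at hmem
    rcases hmem with hmem | hmem
    · exact huP (Walk.fst_mem_support_of_mem_edges P hmem)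
    · rw [List.mem_singleton, Sym2.eq_iff] at hmem
      rcases hmem with ⟨_, hvu⟩ | ⟨_, hvw'⟩
      · exact huv.ne' hvu
      · exact hvw hvw'
  let cyc : G.Walk u u := Walk.cons huv Q
  have hcyc : cyc.IsCycle := (Walk.cons_isCycle_iff Q huv).2 ⟨hQ, hQe⟩
  refine ⟨cyc.toSubgraph, ⟨?_, ⟨u, ?_⟩, ?_, ?_⟩, u, v, ?_, ?_, huv.ne⟩
  · rw [Walk.verts_toSubgraph]
    exact cyc.support.finite_toSet
  · rw [Walk.verts_toSubgraph]
    exact cyc.start_mem_support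
  · exact (Walk.toSubgraph_connected cyc).coe
  · intro z hz
    rw [Walk.verts_toSubgraph] at hz
    exact EarAux.cycle_regular cyc hcyc hz
  · rw [Walk.verts_toSubgraph]
    exact cyc.start_mem_support
  · rw [Walk.verts_toSubgraph]
    show v ∈ cyc.support
    rw [Walk.support_cons]
    exact List.mem_cons_of_mem _ Q.start_mem_support


lemma EarAux.step_ex (hG : TwoConnected G) (A : G.Subgraph) {b c : V}
    (hb : b ∈ A.verts) (hc : c ∈ A.verts) (hbc : b ≠ c) (u v : V) :
    ∃ B : G.Subgraph, (B = A ∨ IsEarStep G A B) ∧ A ≤ B ∧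
      (G.Adj u v → u ∈ A.verts → B.Adj u v) := by
  by_cases huv : G.Adj u v
  · by_cases hu : u ∈ A.verts
    · by_cases hvA : v ∈ A.verts
      · by_cases hA : A.Adj u v
        · exact ⟨A, Or.inl rfl, le_rfl, fun _ _ => hA⟩
        · obtain ⟨B, hB, hle, hadj⟩ := EarAux.ear_edge A hu hvA huv
          exact ⟨B, Or.inr hB, hle, fun _ _ => hadj⟩
      · have hex : ∃ a ∈ A.verts, a ≠ u := by
          rcases eq_or_ne b u with hbu | h
          · exact ⟨c, hc, fun h' => hbc (hbu.trans h'.symm)⟩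
          · exact ⟨b, hb, h⟩
        obtain ⟨a, ha, hau⟩ := hex
        obtain ⟨B, hB, hle, hadj⟩ := EarAux.ear_attach hG A hu ha hau huv hvA
        exact ⟨B, Or.inr hB, hle, fun _ _ => hadj⟩
    · exact ⟨A, Or.inl rfl, le_rfl, fun _ h => absurd h hu⟩
  · exact ⟨A, Or.inl rfl, le_rfl, fun h _ => absurd h huv⟩

end EarAuxSec2

/-- Every countable 2-connected graph (with at least three vertices) admits an
ear decomposition. -/
theorem exists_ear_decomposition {V : Type*} [Countable V] (G : SimpleGraph V)
    (hG : TwoConnected G) :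
    ∃ Gs : ℕ → G.Subgraph,
      IsCycleSubgraph G (Gs 0) ∧
      (∀ n : ℕ, Gs (n + 1) = Gs n ∨ IsEarStep G (Gs n) (Gs (n + 1))) ∧
      (⨆ n, Gs n) = ⊤ := by
  classical
  obtain ⟨C0, hC0, b, c, hb0, hc0, hbc⟩ := EarAux.exists_cycle hG
  have hne : Nonempty V := ⟨b⟩
  obtain ⟨g, hg⟩ := exists_surjective_nat V
  let e : ℕ → V × V := fun n =>
    (g (Nat.unpair (Nat.unpair n).2).1, g (Nat.unpair (Nat.unpair n).2).2)
  have he : ∀ (x y : V) (m : ℕ), ∃ n, m ≤ n ∧ e n = (x, y) := by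
    intro x y m
    obtain ⟨i, hi⟩ := hg x
    obtain ⟨j, hj⟩ := hg y
    refine ⟨Nat.pair m (Nat.pair i j), Nat.left_le_pair _ _, ?_⟩
    simp [e, Nat.unpair_pair, hi, hj]
  have key : ∀ (A : G.Subgraph), b ∈ A.verts → c ∈ A.verts → ∀ u v : V,
      ∃ B : G.Subgraph, (B = A ∨ IsEarStep G A B) ∧ A ≤ B ∧
        (G.Adj u v → u ∈ A.verts → B.Adj u v) :=
    fun A hb hc u v => EarAux.step_ex hG A hb hc hbc u v
  let F : G.Subgraph → V × V → G.Subgraph := fun A uv =>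
    if h : b ∈ A.verts ∧ c ∈ A.verts then
      Classical.choose (key A h.1 h.2 uv.1 uv.2) else A
  let Gs : ℕ → G.Subgraph := fun n => Nat.rec C0 (fun n A => F A (e n)) n
  have hGsS : ∀ n, Gs (n + 1) = F (Gs n) (e n) := fun n => rfl
  have hInv : ∀ n, b ∈ (Gs n).verts ∧ c ∈ (Gs n).verts := by
    intro n
    induction n with
    | zero => exact ⟨hb0, hc0⟩
    | succ n ih =>
      rw [hGsS n]
      have hF : F (Gs n) (e n) =
          Classical.choose (key (Gs n) ih.1 ih.2 (e n).1 (e n).2) := dif_pos ⟨ih.1, ih.2⟩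
      rw [hF]
      have hsp := Classical.choose_spec (key (Gs n) ih.1 ih.2 (e n).1 (e n).2)
      exact ⟨hsp.2.1.1 ih.1, hsp.2.1.1 ih.2⟩
  have hspec : ∀ n, (Gs (n + 1) = Gs n ∨ IsEarStep G (Gs n) (Gs (n + 1))) ∧
      Gs n ≤ Gs (n + 1) ∧
      (G.Adj (e n).1 (e n).2 → (e n).1 ∈ (Gs n).verts → (Gs (n + 1)).Adj (e n).1 (e n).2) := by
    intro n
    have ih := hInv n
    have hF : Gs (n + 1) =
        Classical.choose (key (Gs n) ih.1 ih.2 (e n).1 (e n).2) :=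
      (hGsS n).trans (dif_pos ⟨ih.1, ih.2⟩)
    have hsp := Classical.choose_spec (key (Gs n) ih.1 ih.2 (e n).1 (e n).2)
    rw [hF]
    exact hsp
  have hmono : ∀ m n, m ≤ n → Gs m ≤ Gs n :=
    fun m n h => monotone_nat_of_le_succ (fun k => (hspec k).2.1) h
  have hvert : ∀ v : V, ∃ n, v ∈ (Gs n).verts := by
    have main : ∀ (x y : V) (p : G.Walk x y), (∃ n, y ∈ (Gs n).verts) →
        ∃ n, x ∈ (Gs n).verts := by
      intro x y p
      induction p with
      | nil => exact id
      | @cons x z _ h q ih =>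
        intro hy
        obtain ⟨m, hm⟩ := ih hy
        obtain ⟨n, hmn, hen⟩ := he z x m
        have hz : z ∈ (Gs n).verts := (hmono m n hmn).1 hm
        have hadj := (hspec n).2.2
        rw [hen] at hadj
        exact ⟨n + 1, (hadj h.symm hz).snd_mem⟩
    intro v
    obtain ⟨p⟩ := hG.1.preconnected v b
    exact main v b p ⟨0, hb0⟩
  have hedge : ∀ u v : V, G.Adj u v → ∃ n, (Gs n).Adj u v := by
    intro u v huv
    obtain ⟨m, hm⟩ := hvert u
    obtain ⟨n, hmn, hen⟩ := he u v m
    have hadj := (hspec n).2.2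
    rw [hen] at hadj
    exact ⟨n + 1, hadj huv ((hmono m n hmn).1 hm)⟩
  refine ⟨Gs, hC0, fun n => ?_, ?_⟩
  · rcases (hspec n).1 with h | h
    · exact Or.inl h
    · exact Or.inr h
  · apply le_antisymm le_top
    refine ⟨?_, ?_⟩
    · intro v _
      rw [Subgraph.verts_iSup]
      obtain ⟨n, hn⟩ := hvert v
      exact Set.mem_iUnion.2 ⟨n, hn⟩
    · intro u v huv
      rw [Subgraph.top_adj] at huv
      rw [Subgraph.iSup_adj]
      exact hedge u v huv
end

section
/- In a k-connected graph G (k ≥ 1), given a set A of k vertices and a set B of k vertices, there exist k pairwise vertex-disjoint paths each joining a vertex of A to a vertex of B. -/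
open SimpleGraph


namespace MengerAux

variable {V : Type*}

/-- Every `A`–`B` walk meets `S`. -/
def Sep (G : SimpleGraph V) (A B S : Set V) : Prop :=
  ∀ ⦃u v : V⦄, u ∈ A → v ∈ B → ∀ w : G.Walk u v, ∃ s ∈ S, s ∈ w.support

/-- `k` pairwise disjoint `A`–`B` walks. -/
def Linkage (G : SimpleGraph V) (A B : Set V) (k : ℕ) : Prop :=
  ∃ (a b : Fin k → V) (p : ∀ i, G.Walk (a i) (b i)),
    (∀ i, a i ∈ A) ∧ (∀ i, b i ∈ B) ∧
    ∀ i j, i ≠ j → ∀ v ∈ (p i).support, v ∉ (p j).support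

theorem support_mapLe {G H : SimpleGraph V} (hGH : G ≤ H) {u v : V} (p : G.Walk u v) :
    (p.mapLe hGH).support = p.support := by
  have : ⇑(Hom.ofLE hGH) = id := rfl
  simp [Walk.mapLe, Walk.support_map, this]

theorem Linkage.mono {G H : SimpleGraph V} (hGH : G ≤ H) {A B : Set V} {k : ℕ}
    (h : Linkage G A B k) : Linkage H A B k := by
  obtain ⟨a, b, p, ha, hb, hd⟩ := h
  refine ⟨a, b, fun i => (p i).mapLe hGH, ha, hb, fun i j hij v hv => ?_⟩
  rw [support_mapLe] at hv ⊢
  exact hd i j hij v hv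

theorem Sep.anti {G H : SimpleGraph V} (hGH : G ≤ H) {A B S : Set V}
    (h : Sep H A B S) : Sep G A B S := by
  intro u v hu hv w
  obtain ⟨s, hs, hsupp⟩ := h hu hv (w.mapLe hGH)
  exact ⟨s, hs, by rwa [support_mapLe] at hsupp⟩

theorem Sep.symm {G : SimpleGraph V} {A B S : Set V} (h : Sep G A B S) : Sep G B A S := by
  intro u v hu hv w
  obtain ⟨s, hs1, hs2⟩ := h hv hu w.reverse
  exact ⟨s, hs1, by rwa [Walk.support_reverse, List.mem_reverse] at hs2⟩

theorem support_last {G : SimpleGraph V} {u v : V} (w : G.Walk u v) :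
    w.support = w.support.dropLast ++ [v] := by
  conv_lhs => rw [← List.dropLast_append_getLast (show w.support ≠ [] by simp)]
  simp

theorem mem_S_of_dropLast {G : SimpleGraph V} {S : Set V} {u v : V} {w : G.Walk u v}
    (h : ∀ t ∈ w.support.dropLast, t ∉ S) {t : V} (ht : t ∈ w.support) (htS : t ∈ S) :
    t = v := by
  rw [support_last w] at ht
  rcases List.mem_append.1 ht with h1 | h1
  · exact absurd htS (h t h1)
  · simpa using h1

/-- First hit of `S` along a walk: a prefix walk ending at the first vertex of `S`. -/
theorem exists_firstHit {G : SimpleGraph V} {S : Set V} :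
    ∀ {u v : V} (w : G.Walk u v), (∃ s ∈ S, s ∈ w.support) →
    ∃ s, s ∈ S ∧ ∃ w' : G.Walk u s, (∀ t ∈ w'.support, t ∈ w.support) ∧
      (∀ e ∈ w'.edges, e ∈ w.edges) ∧ ∀ t ∈ w'.support.dropLast, t ∉ S := by
  intro u v w
  induction w with
  | nil =>
    rintro ⟨s, hsS, hs⟩
    simp only [Walk.support_nil, List.mem_singleton] at hs
    subst hs
    exact ⟨s, hsS, Walk.nil, by simp, by simp, by simp⟩
  | @cons a b c h p ih =>
    rintro ⟨s, hsS, hs⟩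
    by_cases ha : a ∈ S
    · exact ⟨a, ha, Walk.nil, by simp, by simp, by simp⟩
    · have hs' : s ∈ p.support := by
        rcases List.mem_cons.1 (by simpa using hs) with h1 | h1
        · exact absurd hsS (h1 ▸ ha)
        · exact h1
      obtain ⟨s', hs'S, w', hsub, hedge, hdrop⟩ := ih ⟨s, hsS, hs'⟩
      refine ⟨s', hs'S, Walk.cons h w', ?_, ?_, ?_⟩
      · intro t ht
        rcases List.mem_cons.1 (by simpa using ht) with h1 | h1
        · simp [h1]
        · exact List.mem_cons_of_mem _ (hsub t h1)
      · intro e he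
        rcases List.mem_cons.1 (by simpa using he) with h1 | h1
        · simp [h1]
        · exact List.mem_cons_of_mem _ (hedge e h1)
      · intro t ht
        rw [Walk.support_cons, List.dropLast_cons_of_ne_nil (by simp)] at ht
        rcases List.mem_cons.1 ht with h1 | h1
        · exact h1 ▸ ha
        · exact hdrop t h1

/-- A prefix of a walk up to a given vertex, avoiding `S`, assuming the walk only
meets `S` possibly at its last vertex and the target is not in `S`. -/
theorem exists_prefix_avoiding {G : SimpleGraph V} {S : Set V} :
    ∀ {u z : V} (w : G.Walk u z) (v : V), v ∈ w.support →
      (∀ t ∈ w.support.dropLast, t ∉ S) → v ∉ S →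
    ∃ w' : G.Walk u v, (∀ t ∈ w'.support, t ∈ w.support) ∧ ∀ t ∈ w'.support, t ∉ S := by
  intro u z w
  induction w with
  | nil =>
    intro v hv _ hvS
    simp only [Walk.support_nil, List.mem_singleton] at hv
    subst hv
    exact ⟨Walk.nil, by simp, by simpa using hvS⟩
  | @cons a b c h p ih =>
    intro v hv hdrop hvS
    by_cases hva : v = a
    · subst hva
      exact ⟨Walk.nil, by simp, by simpa using hvS⟩
    · have haS : a ∉ S := by
        apply hdrop
        rw [Walk.support_cons, List.dropLast_cons_of_ne_nil (by simp)]
        exact List.mem_cons_self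
      have hv' : v ∈ p.support := by
        rcases List.mem_cons.1 (by simpa using hv) with h1 | h1
        · exact absurd h1 hva
        · exact h1
      have hdrop' : ∀ t ∈ p.support.dropLast, t ∉ S := by
        intro t ht
        apply hdrop
        rw [Walk.support_cons, List.dropLast_cons_of_ne_nil (by simp)]
        exact List.mem_cons_of_mem _ ht
      obtain ⟨w', hsub, havoid⟩ := ih v hv' hdrop' hvS
      refine ⟨Walk.cons h w', ?_, ?_⟩
      · intro t ht
        rcases List.mem_cons.1 (by simpa using ht) with h1 | h1
        · simp [h1]
        · exact List.mem_cons_of_mem _ (hsub t h1)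
      · intro t ht
        rcases List.mem_cons.1 (by simpa using ht) with h1 | h1
        · exact h1 ▸ haS
        · exact havoid t h1

end MengerAux
namespace MengerAux

variable {V : Type*}

/-- Contraction of the edge `xy`: `y` becomes isolated, its edges move to `x`. -/
def contractE (G : SimpleGraph V) (x y : V) : SimpleGraph V where
  Adj u v := u ≠ v ∧ u ≠ y ∧ v ≠ y ∧
    (G.Adj u v ∨ (u = x ∧ G.Adj y v) ∨ (v = x ∧ G.Adj u y))
  symm := by
    constructor
    rintro u v ⟨h1, h2, h3, h4⟩
    refine ⟨h1.symm, h3, h2, ?_⟩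
    rcases h4 with h | ⟨rfl, h⟩ | ⟨rfl, h⟩
    · exact Or.inl h.symm
    · exact Or.inr (Or.inr ⟨rfl, h.symm⟩)
    · exact Or.inr (Or.inl ⟨rfl, h.symm⟩)
  loopless := by constructor; rintro u ⟨h1, -⟩; exact h1 rfl

/-- The vertex projection map of the contraction. -/
def cproj [DecidableEq V] (x y z : V) : V := if z = y then x else z

section Contract

variable {G : SimpleGraph V} {x y : V}

theorem start_eq_of_mem_support_contractE :
    ∀ {u v : V} (w : (contractE G x y).Walk u v), y ∈ w.support → u = y := by
  intro u v w
  induction w with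
  | nil =>
    intro h
    simp only [Walk.support_nil, List.mem_singleton] at h
    exact h.symm
  | @cons a b c h p ih =>
    intro hy
    simp only [Walk.support_cons] at hy
    rcases List.mem_cons.1 hy with h1 | h1
    · exact h1.symm
    · exact absurd (ih h1) h.2.2.1

variable [DecidableEq V]

theorem cproj_ne_y (hxy : x ≠ y) (z : V) : cproj x y z ≠ y := by
  unfold cproj; split
  · exact hxy
  · assumption

theorem cproj_eq_self {z : V} (hz : z ≠ y) : cproj x y z = z := if_neg hz

theorem cproj_y : cproj x y y = x := if_pos rfl

/-- Projection of a walk of `G` to the contracted graph (sends `y` to `x`). -/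
theorem exists_projWalk (hxy : G.Adj x y) :
    ∀ {u v : V} (w : G.Walk u v),
    ∃ w' : (contractE G x y).Walk (cproj x y u) (cproj x y v),
      ∀ t ∈ w'.support, ∃ z ∈ w.support, cproj x y z = t := by
  intro u v w
  induction w with
  | nil =>
    rename_i u'
    refine ⟨Walk.nil, fun t ht => ⟨u', by simp, ?_⟩⟩
    simp only [Walk.support_nil, List.mem_singleton] at ht
    exact ht.symm
  | @cons a b c h p ih =>
    obtain ⟨w', hw'⟩ := ih
    by_cases hab : cproj x y a = cproj x y b
    · refine ⟨w'.copy hab.symm rfl, ?_⟩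
      intro t ht
      rw [Walk.support_copy] at ht
      obtain ⟨z, hz, hzt⟩ := hw' t ht
      exact ⟨z, List.mem_cons_of_mem _ hz, hzt⟩
    · have hadj : (contractE G x y).Adj (cproj x y a) (cproj x y b) := by
        refine ⟨hab, cproj_ne_y hxy.ne _, cproj_ne_y hxy.ne _, ?_⟩
        by_cases hay : a = y
        · have hby : b ≠ y := fun hb => hab (by rw [hay, hb])
          refine Or.inr (Or.inl ⟨by rw [hay, cproj_y], ?_⟩)
          rw [cproj_eq_self hby]
          rwa [hay] at h
        · by_cases hby : b = y
          · refine Or.inr (Or.inr ⟨by rw [hby, cproj_y], ?_⟩)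
            rw [cproj_eq_self hay]
            rwa [hby] at h
          · rw [cproj_eq_self hay, cproj_eq_self hby]
            exact Or.inl h
      refine ⟨Walk.cons hadj w', ?_⟩
      intro t ht
      simp only [Walk.support_cons] at ht
      rcases List.mem_cons.1 ht with h1 | h1
      · exact ⟨a, List.mem_cons_self, h1.symm⟩
      · obtain ⟨z, hz, hzt⟩ := hw' t h1
        exact ⟨z, List.mem_cons_of_mem _ hz, hzt⟩

omit [DecidableEq V] in
/-- Lifting a walk of the contracted graph back to `G`, possibly inserting `y`. -/
theorem exists_liftWalk (hxy : G.Adj x y) :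
    ∀ {u v : V} (w : (contractE G x y).Walk u v),
    ∃ w' : G.Walk u v, (∀ t ∈ w'.support, t ∈ w.support ∨ t = y) ∧
      (x ∉ w.support → ∀ t ∈ w'.support, t ∈ w.support) := by
  intro u v w
  induction w with
  | nil => exact ⟨Walk.nil, by simp, by simp⟩
  | @cons a b c h p ih =>
    obtain ⟨w', hw'1, hw'2⟩ := ih
    by_cases hab : G.Adj a b
    · refine ⟨Walk.cons hab w', ?_, ?_⟩
      · intro t ht
        simp only [Walk.support_cons] at ht
        rcases List.mem_cons.1 ht with h1 | h1
        · exact Or.inl (by simp [h1])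
        · rcases hw'1 t h1 with h2 | h2
          · exact Or.inl (List.mem_cons_of_mem _ h2)
          · exact Or.inr h2
      · intro hx t ht
        have hx' : x ∉ p.support := fun hh => hx (by simp [Walk.support_cons, hh])
        simp only [Walk.support_cons] at ht ⊢
        rcases List.mem_cons.1 ht with h1 | h1
        · simp [h1]
        · exact List.mem_cons_of_mem _ (hw'2 hx' t h1)
    · rcases h.2.2.2 with h1 | ⟨hax, hyb⟩ | ⟨hbx, hay⟩
      · exact absurd h1 hab
      · refine ⟨Walk.cons (hax ▸ hxy) (Walk.cons hyb w'), ?_, ?_⟩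
        · intro t ht
          simp only [Walk.support_cons] at ht
          rcases List.mem_cons.1 ht with h1 | h1
          · exact Or.inl (by simp [Walk.support_cons, h1])
          rcases List.mem_cons.1 h1 with h2 | h2
          · exact Or.inr h2
          rcases hw'1 t h2 with h3 | h3
          · exact Or.inl (by simp [Walk.support_cons, Or.inr h3])
          · exact Or.inr h3
        · intro hx
          exact absurd (by simp [Walk.support_cons, hax]) hx
      · refine ⟨Walk.cons hay (Walk.cons (hbx ▸ hxy.symm) w'), ?_, ?_⟩
        · intro t ht
          simp only [Walk.support_cons] at ht
          rcases List.mem_cons.1 ht with h1 | h1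
          · exact Or.inl (by simp [Walk.support_cons, h1])
          rcases List.mem_cons.1 h1 with h2 | h2
          · exact Or.inr h2
          rcases hw'1 t h2 with h3 | h3
          · exact Or.inl (by simp [Walk.support_cons, Or.inr h3])
          · exact Or.inr h3
        · intro hx
          have : x ∈ p.support := hbx ▸ p.start_mem_support
          exact fun t ht => absurd (by simp [Walk.support_cons, this]) hx

end Contract

end MengerAux
namespace MengerAux

variable {V : Type*}

theorem deleteEdges_edge_lt [Finite V] {G : SimpleGraph V} {e : Sym2 V} (he : e ∈ G.edgeSet) :
    (G.deleteEdges {e}).edgeSet.ncard < G.edgeSet.ncard := by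
  rw [edgeSet_deleteEdges]
  exact Set.ncard_diff_singleton_lt_of_mem he (Set.toFinite _)

theorem y_not_mem_edge {G : SimpleGraph V} {x y : V} {q : Sym2 V}
    (hq : q ∈ (contractE G x y).edgeSet) : y ∉ q := by
  induction q with
  | _ u v =>
    rw [mem_edgeSet] at hq
    rw [Sym2.mem_iff]
    push_neg
    exact ⟨fun h => hq.2.1 h.symm, fun h => hq.2.2.1 h.symm⟩

theorem contractE_edge_lt [Finite V] {G : SimpleGraph V} {x y : V} (hxy : G.Adj x y) :
    (contractE G x y).edgeSet.ncard < G.edgeSet.ncard := by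
  classical
  set g : V → V := fun z => if z = x then y else z with hg
  set m : Sym2 V → Sym2 V := fun q => if q ∈ G.edgeSet then q else Sym2.map g q with hm
  have key : ∀ q ∈ (contractE G x y).edgeSet,
      (m q = q ∧ q ∈ G.edgeSet) ∨
      (∃ z, z ≠ x ∧ z ≠ y ∧ q = s(x, z) ∧ m q = s(y, z) ∧ G.Adj y z) := by
    intro q hq
    induction q with
    | _ u v =>
      rw [mem_edgeSet] at hq
      obtain ⟨huv, huy, hvy, hadj⟩ := hq
      by_cases hreal : G.Adj u v
      · exact Or.inl ⟨by simp [hm, hreal], by simpa using hreal⟩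
      · rcases hadj with h1 | ⟨hux, h1⟩ | ⟨hvx, h1⟩
        · exact absurd h1 hreal
        · have hvx : v ≠ x := fun hv => huv (hux.trans hv.symm)
          refine Or.inr ⟨v, hvx, hvy, by rw [hux], ?_, h1⟩
          simp only [hm]
          rw [if_neg (by simpa using hreal)]
          rw [Sym2.map_pair_eq]
          rw [show g u = y by simp [hg, hux], show g v = v by simp [hg, hvx]]
        · have hux' : u ≠ x := fun hu => huv (hu.trans hvx.symm)
          refine Or.inr ⟨u, hux', huy, by rw [hvx]; exact Sym2.eq_swap, ?_, h1.symm⟩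
          simp only [hm]
          rw [if_neg (by simpa using hreal)]
          rw [Sym2.map_pair_eq]
          rw [show g u = u by simp [hg, hux'], show g v = y by simp [hg, hvx]]
          exact Sym2.eq_swap
  have hmaps : Set.MapsTo m (contractE G x y).edgeSet (G.edgeSet \ {s(x, y)}) := by
    intro q hq
    rcases key q hq with ⟨hmq, hqe⟩ | ⟨z, hzx, hzy, hq1, hq2, hadj⟩
    · rw [hmq]
      refine ⟨hqe, fun hmem => ?_⟩
      rw [Set.mem_singleton_iff] at hmem
      exact y_not_mem_edge hq (by rw [hmem]; simp)
    · rw [hq2]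
      refine ⟨by rwa [mem_edgeSet], fun hmem => ?_⟩
      rw [Set.mem_singleton_iff] at hmem
      rw [Sym2.eq, Sym2.rel_iff'] at hmem
      rcases hmem with h1 | h1 <;> simp only [Prod.swap_prod_mk, Prod.mk.injEq] at h1
      · exact hxy.ne h1.1.symm
      · exact hzx h1.2
  have hinj : Set.InjOn m (contractE G x y).edgeSet := by
    intro q1 hq1 q2 hq2 heq
    rcases key q1 hq1 with ⟨h1, he1⟩ | ⟨z1, hz1x, hz1y, hq11, hq12, _⟩ <;>
      rcases key q2 hq2 with ⟨h2, he2⟩ | ⟨z2, hz2x, hz2y, hq21, hq22, _⟩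
    · rw [← h1, ← h2]; exact heq
    · exfalso
      rw [h1, hq22] at heq
      exact y_not_mem_edge hq1 (by rw [heq]; simp)
    · exfalso
      rw [hq12, h2] at heq
      exact y_not_mem_edge hq2 (by rw [← heq]; simp)
    · rw [hq12, hq22] at heq
      rw [Sym2.eq, Sym2.rel_iff'] at heq
      rcases heq with h1 | h1
      · rw [hq11, hq21, (by simpa using h1 : z1 = z2)]
      · simp only [Prod.swap_prod_mk, Prod.mk.injEq] at h1
        exact absurd h1.1.symm hz2y
  calc (contractE G x y).edgeSet.ncard
      = (m '' (contractE G x y).edgeSet).ncard := (Set.ncard_image_of_injOn hinj).symm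
    _ ≤ (G.edgeSet \ {s(x, y)}).ncard :=
        Set.ncard_le_ncard hmaps.image_subset (Set.toFinite _)
    _ < G.edgeSet.ncard :=
        Set.ncard_diff_singleton_lt_of_mem (by simpa using hxy) (Set.toFinite _)

end MengerAux
namespace MengerAux

variable {V : Type*}

theorem fan_trim {G : SimpleGraph V} {A S : Set V} {k : ℕ} (hL : Linkage G A S k) :
    ∃ (a s : Fin k → V) (p : ∀ i, G.Walk (a i) (s i)),
      (∀ i, a i ∈ A) ∧ (∀ i, s i ∈ S) ∧
      (∀ i, ∀ t ∈ (p i).support.dropLast, t ∉ S) ∧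
      (∀ i j, i ≠ j → ∀ v ∈ (p i).support, v ∉ (p j).support) := by
  obtain ⟨a, b, w, ha, hb, hd⟩ := hL
  have h : ∀ i, ∃ s, s ∈ S ∧ ∃ p : G.Walk (a i) s,
      (∀ t ∈ p.support, t ∈ (w i).support) ∧ ∀ t ∈ p.support.dropLast, t ∉ S := by
    intro i
    obtain ⟨s, hsS, p, hsub, _, hdrop⟩ :=
      exists_firstHit (w i) ⟨b i, hb i, Walk.end_mem_support _⟩
    exact ⟨s, hsS, p, hsub, hdrop⟩
  choose s hsS p hsub hdrop using h
  exact ⟨a, s, p, ha, hsS, hdrop,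
    fun i j hij v hv hv' => hd i j hij v (hsub i v hv) (hsub j v hv')⟩

theorem glue {G : SimpleGraph V} {A B S : Set V} {k : ℕ}
    (hS : S.Finite) (hcard : S.ncard = k) (hsep : Sep G A B S)
    (hA : Linkage G A S k) (hB : Linkage G B S k) : Linkage G A B k := by
  classical
  obtain ⟨a, s, p, ha, hsS, hdropA, hdA⟩ := fan_trim hA
  obtain ⟨b, s', q, hb, hs'S, hdropB, hdB⟩ := fan_trim hB
  haveI : Fintype ↥S := hS.fintype
  have hcardS : Fintype.card ↥S = k := by
    rw [← Set.toFinset_card]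
    rwa [← Set.ncard_eq_toFinset_card']
  -- endpoints are injective, hence bijective onto S
  have hsinj : Function.Injective fun i => (⟨s i, hsS i⟩ : ↥S) := by
    intro i j hij
    by_contra hne
    have h1 : s i = s j := congrArg Subtype.val hij
    refine hdA i j hne (s i) (Walk.end_mem_support _) ?_
    rw [h1]
    exact Walk.end_mem_support (p j)
  have hs'inj : Function.Injective fun i => (⟨s' i, hs'S i⟩ : ↥S) := by
    intro i j hij
    by_contra hne
    have h1 : s' i = s' j := congrArg Subtype.val hij
    refine hdB i j hne (s' i) (Walk.end_mem_support _) ?_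
    rw [h1]
    exact Walk.end_mem_support (q j)
  have hsbij : Function.Bijective fun i => (⟨s i, hsS i⟩ : ↥S) :=
    (Fintype.bijective_iff_injective_and_card _).2 ⟨hsinj, by simp [hcardS]⟩
  have hs'bij : Function.Bijective fun i => (⟨s' i, hs'S i⟩ : ↥S) :=
    (Fintype.bijective_iff_injective_and_card _).2 ⟨hs'inj, by simp [hcardS]⟩
  set eS := Equiv.ofBijective _ hsbij with heS
  set eS' := Equiv.ofBijective _ hs'bij with heS'
  set σ : Fin k → Fin k := fun i => eS'.symm (eS i) with hσdef
  have hσ : ∀ i, s' (σ i) = s i := by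
    intro i
    have : eS' (eS'.symm (eS i)) = eS i := eS'.apply_symm_apply _
    have h2 := congrArg Subtype.val this
    exact h2
  have hσinj : Function.Injective σ :=
    fun i j hij => eS.injective (eS'.symm.injective hij)
  -- cross intersections lie in S
  have hcross : ∀ i j v, v ∈ (p i).support → v ∈ (q j).support → v ∈ S := by
    intro i j v hv1 hv2
    by_contra hvS
    obtain ⟨w1, hw1sub, hw1av⟩ := exists_prefix_avoiding (p i) v hv1 (hdropA i) hvS
    obtain ⟨w2, hw2sub, hw2av⟩ := exists_prefix_avoiding (q j) v hv2 (hdropB j) hvS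
    obtain ⟨t, htS, htsupp⟩ := hsep (ha i) (hb j) (w1.append w2.reverse)
    rw [Walk.mem_support_append_iff] at htsupp
    rcases htsupp with h1 | h1
    · exact hw1av t h1 htS
    · rw [Walk.support_reverse, List.mem_reverse] at h1
      exact hw2av t h1 htS
  -- glue
  refine ⟨a, fun i => b (σ i),
    fun i => (p i).append (((q (σ i)).reverse).copy (hσ i) rfl), ha, fun i => hb _, ?_⟩
  intro i j hij v hv hv'
  rw [Walk.mem_support_append_iff, Walk.support_copy, Walk.support_reverse,
    List.mem_reverse] at hv hv'
  have hps : ∀ i' j' , i' ≠ j' → v ∈ (p i').support → v ∈ (q (σ j')).support → False := by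
    intro i' j' hne hv1 hv2
    have hvS : v ∈ S := hcross i' (σ j') v hv1 hv2
    have h1 : v = s i' := mem_S_of_dropLast (hdropA i') hv1 hvS
    have h2 : v = s' (σ j') := mem_S_of_dropLast (hdropB (σ j')) hv2 hvS
    have : s i' = s j' := by rw [← h1, h2, hσ]
    exact hne (hsinj (Subtype.ext this))
  rcases hv with h1 | h1 <;> rcases hv' with h2 | h2
  · exact hdA i j hij v h1 h2
  · exact hps i j hij h1 h2
  · exact hps j i (Ne.symm hij) h2 h1
  · exact hdB (σ i) (σ j) (fun hh => hij (hσinj hh)) v h1 h2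

end MengerAux
namespace MengerAux

variable {V : Type*}

theorem menger_finite [Finite V] :
    ∀ (n : ℕ) (G : SimpleGraph V) (A B : Set V) (k : ℕ), G.edgeSet.ncard = n →
      (∀ S : Set V, Sep G A B S → k ≤ S.ncard) → Linkage G A B k := by
  classical
  intro n
  induction n using Nat.strong_induction_on with
  | _ n ih =>
  intro G A B k hn hsep
  by_cases hE : G.edgeSet = ∅
  · -- no edges: trivial walks inside A ∩ B
    have hAB : Sep G A B (A ∩ B) := by
      intro u v hu hv w
      cases w with
      | nil => exact ⟨u, ⟨hu, hv⟩, Walk.start_mem_support _⟩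
      | cons h p =>
        exfalso
        have : s(u, _) ∈ G.edgeSet := G.mem_edgeSet.2 h
        rw [hE] at this
        exact this
    have hk : k ≤ (A ∩ B).ncard := hsep _ hAB
    haveI := Fintype.ofFinite V
    rw [Set.ncard_eq_toFinset_card'] at hk
    obtain ⟨t, hts, htcard⟩ := Finset.exists_subset_card_eq hk
    have e := t.equivFinOfCardEq htcard
    refine ⟨fun i => (e.symm i : V), fun i => (e.symm i : V), fun i => Walk.nil,
      fun i => ?_, fun i => ?_, fun i j hij v hv hv' => ?_⟩
    · have := hts (e.symm i).2
      rw [Set.mem_toFinset] at this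
      exact this.1
    · have := hts (e.symm i).2
      rw [Set.mem_toFinset] at this
      exact this.2
    · simp only [Walk.support_nil, List.mem_singleton] at hv hv'
      exact hij (e.symm.injective (Subtype.ext (hv ▸ hv' : (e.symm i : V) = e.symm j)).symm ▸ rfl)
  · -- pick an edge
    obtain ⟨e, he⟩ := Set.nonempty_iff_ne_empty.2 hE
    induction e with
    | _ x y =>
    have hxy : G.Adj x y := G.mem_edgeSet.1 he
    have hxyne : x ≠ y := hxy.ne
    set A' : Set V := (A \ {y}) ∪ {z : V | z = x ∧ y ∈ A} with hA'
    set B' : Set V := (B \ {y}) ∪ {z : V | z = x ∧ y ∈ B} with hB'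
    have memA' : ∀ {u : V}, u ∈ A → cproj x y u ∈ A' := by
      intro u hu
      by_cases huy : u = y
      · right
        exact ⟨by rw [huy, cproj_y], huy ▸ hu⟩
      · left
        rw [cproj_eq_self huy]
        exact ⟨hu, huy⟩
    have memB' : ∀ {u : V}, u ∈ B → cproj x y u ∈ B' := by
      intro u hu
      by_cases huy : u = y
      · right
        exact ⟨by rw [huy, cproj_y], huy ▸ hu⟩
      · left
        rw [cproj_eq_self huy]
        exact ⟨hu, huy⟩
    by_cases hY : ∀ Y : Set V, Sep (contractE G x y) A' B' Y → k ≤ Y.ncard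
    · -- contraction branch
      obtain ⟨a, b, w, ha, hb, hd⟩ :=
        ih _ (hn ▸ contractE_edge_lt hxy) (contractE G x y) A' B' k rfl hY
      have hynot : ∀ i, y ∉ (w i).support := by
        intro i hy
        have hay := start_eq_of_mem_support_contractE (w i) hy
        rcases ha i with h1 | h1
        · exact h1.2 hay
        · exact hxyne (h1.1.symm.trans hay)
      have lift1 : ∀ i, ∃ (a' b' : V) (ww : G.Walk a' b'), a' ∈ A ∧ b' ∈ B ∧
          (∀ t ∈ ww.support, t ∈ (w i).support ∨ t = y) ∧
          (x ∉ (w i).support → ∀ t ∈ ww.support, t ∈ (w i).support) := by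
        intro i
        obtain ⟨w', hw'1, hw'2⟩ := exists_liftWalk hxy (w i)
        -- fix the start
        have hstart : ∃ (a' : V) (w1 : G.Walk a' (b i)), a' ∈ A ∧
            (∀ t ∈ w1.support, t ∈ (w i).support ∨ t = y) ∧
            (x ∉ (w i).support → ∀ t ∈ w1.support, t ∈ (w i).support) := by
          by_cases haA : a i ∈ A
          · exact ⟨a i, w', haA, hw'1, fun hx t ht => hw'2 hx t ht⟩
          · rcases ha i with h1 | h1
            · exact absurd h1.1 haA
            · refine ⟨y, Walk.cons (h1.1 ▸ hxy.symm) w', h1.2, ?_, ?_⟩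
              · intro t ht
                simp only [Walk.support_cons] at ht
                rcases List.mem_cons.1 ht with h2 | h2
                · exact Or.inr h2
                · exact hw'1 t h2
              · intro hx
                exact absurd (h1.1 ▸ Walk.start_mem_support (w i)) hx
        obtain ⟨a', w1, ha', hsub1, hsub1'⟩ := hstart
        -- fix the end
        by_cases hbB : b i ∈ B
        · exact ⟨a', b i, w1, ha', hbB, hsub1, hsub1'⟩
        · rcases hb i with h1 | h1
          · exact absurd h1.1 hbB
          · refine ⟨a', y, w1.concat (h1.1 ▸ hxy), ha', h1.2, ?_, ?_⟩
            · intro t ht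
              rw [Walk.support_concat] at ht
              rcases List.mem_append.1 ht with h2 | h2
              · exact hsub1 t h2
              · exact Or.inr (by simpa using h2)
            · intro hx
              exact absurd (h1.1 ▸ Walk.end_mem_support (w i)) hx
      choose a' b' ww ha' hb' hsub hsub' using lift1
      refine ⟨a', b', ww, ha', hb', ?_⟩
      intro i j hij v hv hv'
      have hx_of : ∀ i', v ∈ (ww i').support → v = y → x ∈ (w i').support := by
        intro i' hvi hvy
        by_contra hx
        exact hynot i' (hvy ▸ hsub' i' hx v hvi)
      rcases hsub i v hv with h1 | h1 <;> rcases hsub j v hv' with h2 | h2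
      · exact hd i j hij v h1 h2
      · exact hynot i (h2 ▸ h1)
      · exact hynot j (h1 ▸ h2)
      · exact hd i j hij x (hx_of i hv h1) (hx_of j hv' h2)
    · -- separator branch
      push_neg at hY
      obtain ⟨Y, hYsep, hYlt⟩ := hY
      have hxY : x ∈ Y := by
        by_contra hxY
        refine absurd (hsep Y ?_) (not_le.2 hYlt)
        intro u v hu hv wuv
        obtain ⟨w', hw'⟩ := exists_projWalk hxy wuv
        obtain ⟨t, htY, htsupp⟩ := hYsep (memA' hu) (memB' hv) w'
        obtain ⟨z, hz, hzt⟩ := hw' t htsupp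
        have hzy : z ≠ y := by
          intro hzy
          rw [hzy, cproj_y] at hzt
          exact hxY (hzt ▸ htY)
        rw [cproj_eq_self hzy] at hzt
        exact ⟨t, htY, hzt ▸ hz⟩
      set S : Set V := Y ∪ {y} with hSdef
      have hsepS : Sep G A B S := by
        intro u v hu hv wuv
        by_contra hno
        push_neg at hno
        have hyno : y ∉ wuv.support := fun hy => hno y (Or.inr rfl) hy
        obtain ⟨w', hw'⟩ := exists_projWalk hxy wuv
        obtain ⟨t, htY, htsupp⟩ := hYsep (memA' hu) (memB' hv) w'
        obtain ⟨z, hz, hzt⟩ := hw' t htsupp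
        have hzy : z ≠ y := fun hzy => hyno (hzy ▸ hz)
        rw [cproj_eq_self hzy] at hzt
        exact hno t (Or.inl htY) (hzt ▸ hz)
      have hSk : S.ncard = k := by
        refine le_antisymm ?_ (hsep S hsepS)
        calc S.ncard = (insert y Y).ncard := by rw [hSdef, Set.union_singleton]
          _ ≤ Y.ncard + 1 := Set.ncard_insert_le _ _
          _ ≤ k := hYlt
      have hxS : x ∈ S := Or.inl hxY
      have hyS : y ∈ S := Or.inr rfl
      set Gd := G.deleteEdges {s(x, y)} with hGddef
      have hGdle : Gd ≤ G := G.deleteEdges_le _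
      have claimA : ∀ T : Set V, Sep Gd A S T → Sep G A B T := by
        intro T hT u v hu hv wuv
        obtain ⟨s0, hs0S, pw, hsub, hedge, hdrop⟩ :=
          exists_firstHit wuv (hsepS hu hv wuv)
        have hefree : ∀ e' ∈ pw.edges, e' ∉ ({s(x, y)} : Set (Sym2 V)) := by
          intro e' he' hmem
          rw [Set.mem_singleton_iff] at hmem
          subst hmem
          have hx1 : x ∈ pw.support := Walk.fst_mem_support_of_mem_edges _ he'
          have hy1 : y ∈ pw.support := Walk.snd_mem_support_of_mem_edges _ he'
          have h1 : x = s0 := mem_S_of_dropLast hdrop hx1 hxS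
          have h2 : y = s0 := mem_S_of_dropLast hdrop hy1 hyS
          exact hxyne (h1.trans h2.symm)
        obtain ⟨t, htT, htsupp⟩ := hT hu hs0S (pw.toDeleteEdges {s(x, y)} hefree)
        rw [Walk.support_transfer] at htsupp
        exact ⟨t, htT, hsub t htsupp⟩
      have claimB : ∀ T : Set V, Sep Gd S B T → Sep G A B T := by
        intro T hT u v hu hv wuv
        have hrev : ∃ s ∈ S, s ∈ wuv.reverse.support := by
          obtain ⟨t, ht1, ht2⟩ := hsepS hu hv wuv
          exact ⟨t, ht1, by rwa [Walk.support_reverse, List.mem_reverse]⟩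
        obtain ⟨s0, hs0S, pw, hsub, hedge, hdrop⟩ := exists_firstHit wuv.reverse hrev
        have hefree : ∀ e' ∈ pw.edges, e' ∉ ({s(x, y)} : Set (Sym2 V)) := by
          intro e' he' hmem
          rw [Set.mem_singleton_iff] at hmem
          subst hmem
          have hx1 : x ∈ pw.support := Walk.fst_mem_support_of_mem_edges _ he'
          have hy1 : y ∈ pw.support := Walk.snd_mem_support_of_mem_edges _ he'
          have h1 : x = s0 := mem_S_of_dropLast hdrop hx1 hxS
          have h2 : y = s0 := mem_S_of_dropLast hdrop hy1 hyS
          exact hxyne (h1.trans h2.symm)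
        obtain ⟨t, htT, htsupp⟩ :=
          hT hs0S hv ((pw.toDeleteEdges {s(x, y)} hefree).reverse)
        rw [Walk.support_reverse, List.mem_reverse, Walk.support_transfer] at htsupp
        have := hsub t htsupp
        rw [Walk.support_reverse, List.mem_reverse] at this
        exact ⟨t, htT, this⟩
      have hnd : Gd.edgeSet.ncard < n := hn ▸ deleteEdges_edge_lt he
      have LA : Linkage Gd A S k :=
        ih _ hnd Gd A S k rfl (fun T hT => hsep T (claimA T hT))
      have LB : Linkage Gd B S k :=
        ih _ hnd Gd B S k rfl (fun T hT => hsep T (claimB T hT.symm))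
      exact (glue (Set.toFinite S) hSk (Sep.anti hGdle hsepS) LA LB).mono hGdle

end MengerAux
namespace MengerAux

open CategoryTheory Opposite

variable {V : Type*}

/-- Transfer a walk of `G` whose support lies in `s` into the induced subgraph on `s`. -/
theorem exists_induceWalk {G : SimpleGraph V} {s : Set V} :
    ∀ {u v : V} (w : G.Walk u v), (∀ t ∈ w.support, t ∈ s) →
    ∀ (hu : u ∈ s) (hv : v ∈ s),
    ∃ w' : (G.induce s).Walk ⟨u, hu⟩ ⟨v, hv⟩, ∀ t ∈ w'.support, (t : V) ∈ w.support := by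
  intro u v w
  induction w with
  | nil =>
    intro _ hu hv
    exact ⟨Walk.nil, by simp⟩
  | @cons a b c h p ih =>
    intro hsupp hu hv
    have hb : b ∈ s := hsupp b (by simp [Walk.support_cons])
    obtain ⟨w', hw'⟩ := ih (fun t ht => hsupp t (by simp [Walk.support_cons, ht])) hb hv
    refine ⟨Walk.cons (by exact h : (G.induce s).Adj ⟨a, hu⟩ ⟨b, hb⟩) w', ?_⟩
    intro t ht
    replace ht : t ∈ (⟨a, hu⟩ : s) :: w'.support := ht
    rcases List.mem_cons.1 ht with h1 | h1
    · simp [h1]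
    · exact List.mem_cons_of_mem _ (hw' t h1)

/-- Menger for arbitrary vertex types, from the finite case by compactness. -/
theorem menger_general (G : SimpleGraph V) (A B : Set V) (k : ℕ)
    (hAf : A.Finite) (hBf : B.Finite)
    (hsep : ∀ S : Set V, S.Finite → Sep G A B S → k ≤ S.ncard) :
    Linkage G A B k := by
  classical
  set U : Finset V → Set V := fun W => ↑W ∪ A ∪ B with hU
  have hUfin : ∀ W : Finset V, (U W).Finite :=
    fun W => (W.finite_toSet.union hAf).union hBf
  have hUmono : ∀ {W W' : Finset V}, W ≤ W' → U W ⊆ U W' := by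
    intro W W' h t ht
    rcases ht with (ht | ht) | ht
    · exact Or.inl (Or.inl (h ht))
    · exact Or.inl (Or.inr ht)
    · exact Or.inr ht
  have hUW : ∀ W : Finset V, ∀ t ∈ (W : Set V), t ∈ U W := fun W t ht => Or.inl (Or.inl ht)
  have hUA : ∀ W : Finset V, ∀ t ∈ A, t ∈ U W := fun W t ht => Or.inl (Or.inr ht)
  have hUB : ∀ W : Finset V, ∀ t ∈ B, t ∈ U W := fun W t ht => Or.inr ht
  by_cases hW : ∃ W : Finset V, ∀ S : Set ↥(U W),
      Sep (G.induce (U W)) (Subtype.val ⁻¹' A) (Subtype.val ⁻¹' B) S → k ≤ S.ncard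
  · -- some finite induced subgraph already has no small separators
    obtain ⟨W, hWsep⟩ := hW
    haveI : Finite ↥(U W) := (hUfin W).to_subtype
    obtain ⟨a, b, p, ha, hb, hd⟩ :=
      menger_finite _ (G.induce (U W)) (Subtype.val ⁻¹' A) (Subtype.val ⁻¹' B) k rfl hWsep
    refine ⟨fun i => (a i : V), fun i => (b i : V),
      fun i => (p i).map (SimpleGraph.Embedding.induce (U W)).toHom,
      fun i => ha i, fun i => hb i, ?_⟩
    intro i j hij v hv hv'
    change v ∈ ((p i).map (SimpleGraph.Embedding.induce (U W)).toHom).support at hv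
    change v ∈ ((p j).map (SimpleGraph.Embedding.induce (U W)).toHom).support at hv'
    rw [Walk.support_map, List.mem_map] at hv hv'
    obtain ⟨t, ht, rfl⟩ := hv
    obtain ⟨t', ht', htt⟩ := hv'
    have ht'' : t' = t := Subtype.ext htt
    exact hd i j hij t ht (ht'' ▸ ht')
  · push_neg at hW
    exfalso
    set P : Finset V → Finset V → Prop := fun W S =>
      ↑S ⊆ U W ∧ S.card < k ∧
        ∀ ⦃u v : V⦄, u ∈ A → v ∈ B → ∀ w : G.Walk u v,
          (∀ t ∈ w.support, t ∈ U W) → ∃ t ∈ S, t ∈ w.support with hP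
    -- every finite piece has a small separator
    have hne : ∀ W : Finset V, ∃ S : Finset V, P W S := by
      intro W
      obtain ⟨S', hS'sep, hS'lt⟩ := by
        have h1 := hW W
        exact h1
      haveI : Finite ↥(U W) := (hUfin W).to_subtype
      have hS'fin : (Subtype.val '' S').Finite := S'.toFinite.image _
      refine ⟨hS'fin.toFinset, ?_, ?_, ?_⟩
      · intro t ht
        rw [Set.Finite.coe_toFinset] at ht
        obtain ⟨z, _, rfl⟩ := ht
        exact z.2
      · calc hS'fin.toFinset.card = (Subtype.val '' S').ncard :=
              (Set.ncard_eq_toFinset_card _ hS'fin).symm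
          _ = S'.ncard := Set.ncard_image_of_injective _ Subtype.coe_injective
          _ < k := hS'lt
      · intro u v hu hv w hw
        obtain ⟨w', hw'⟩ := exists_induceWalk w hw (hUA W u hu) (hUB W v hv)
        obtain ⟨z, hzS, hzsupp⟩ := hS'sep (by exact hu) (by exact hv) w'
        refine ⟨z, ?_, hw' z hzsupp⟩
        rw [Set.Finite.mem_toFinset]
        exact ⟨z, hzS, rfl⟩
    choose Ssel hsel using hne
    have hrestrict : ∀ {W W' : Finset V}, W' ≤ W → ∀ S : Finset V, P W S →
        P W' (S ∩ (hUfin W').toFinset) := by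
      intro W W' hle S hS
      refine ⟨?_, ?_, ?_⟩
      · intro t ht
        have h2 := (Finset.mem_inter.1 ht).2
        rwa [Set.Finite.mem_toFinset] at h2
      · exact lt_of_le_of_lt (Finset.card_le_card Finset.inter_subset_left) hS.2.1
      · intro u v hu hv w hw
        obtain ⟨t, htS, htw⟩ := hS.2.2 hu hv w (fun t ht => hUmono hle (hw t ht))
        exact ⟨t, Finset.mem_inter.2 ⟨htS, (Set.Finite.mem_toFinset _).2 (hw t htw)⟩, htw⟩
    let F : (Finset V)ᵒᵖ ⥤ Type _ :=
      { obj := fun W => {S : Finset V // P W.unop S}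
        map := fun {W W'} f => TypeCat.ofHom fun S =>
          ⟨S.1 ∩ (hUfin W'.unop).toFinset, hrestrict (leOfHom f.unop) S.1 S.2⟩
        map_id := by
          intro W
          refine ConcreteCategory.hom_ext _ _ (fun S => ?_)
          apply Subtype.ext
          apply Finset.ext
          intro t
          simp only [Finset.mem_inter, Set.Finite.mem_toFinset, types_id_apply, TypeCat.ofHom_apply]
          exact ⟨fun h => h.1, fun h => ⟨h, S.2.1 h⟩⟩
        map_comp := by
          intro W W' W'' f g
          refine ConcreteCategory.hom_ext _ _ (fun S => ?_)
          apply Subtype.ext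
          apply Finset.ext
          intro t
          simp only [Finset.mem_inter, Set.Finite.mem_toFinset, types_comp_apply, TypeCat.ofHom_apply]
          exact ⟨fun h => ⟨⟨h.1, hUmono (leOfHom g.unop) h.2⟩, h.2⟩,
            fun h => ⟨h.1.1, h.2⟩⟩ }
    haveI hFf : ∀ W : (Finset V)ᵒᵖ, Finite (F.obj W) := by
      intro W
      have h2 : {S : Finset V | ↑S ⊆ U W.unop}.Finite := by
        have h3 := (hUfin W.unop).finite_subsets
        exact (h3.preimage (Set.injOn_of_injective Finset.coe_injective))
      exact (h2.subset (fun S hS => hS.1)).to_subtype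
    haveI hFn : ∀ W : (Finset V)ᵒᵖ, Nonempty (F.obj W) :=
      fun W => ⟨⟨Ssel W.unop, hsel W.unop⟩⟩
    obtain ⟨s, hs⟩ := nonempty_sections_of_finite_inverse_system F
    have hcompat : ∀ {W W' : Finset V}, W' ≤ W → ∀ t, t ∈ U W' →
        (t ∈ (s (op W)).1 ↔ t ∈ (s (op W')).1) := by
      intro W W' hle t ht
      have heq := hs ((homOfLE hle).op)
      have heq' : (s (op W)).1 ∩ (hUfin W').toFinset = (s (op W')).1 := by
        have h2 := congrArg Subtype.val heq
        simpa [F] using h2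
      constructor
      · intro h
        rw [← heq']
        exact Finset.mem_inter.2 ⟨h, (Set.Finite.mem_toFinset _).2 ht⟩
      · intro h
        rw [← heq'] at h
        exact (Finset.mem_inter.1 h).1
    have hkey : ∀ (W W' : Finset V) (t : V), t ∈ U W → t ∈ U W' →
        ((t ∈ (s (op W)).1) ↔ (t ∈ (s (op W')).1)) := by
      intro W W' t h1 h2
      have e1 := hcompat (le_sup_left : W ≤ W ⊔ W') t h1
      have e2 := hcompat (le_sup_right : W' ≤ W ⊔ W') t h2
      exact e1.symm.trans e2
    set Sset : Set V := {t : V | t ∈ (s (op ({t} : Finset V))).1} with hSset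
    have hP1 : ∀ (W : Finset V) (t : V), t ∈ U W → (t ∈ Sset ↔ t ∈ (s (op W)).1) := by
      intro W t ht
      exact hkey {t} W t (hUW _ t (by simp)) ht
    have hsmall : ∀ T : Set V, T ⊆ Sset → T.Finite → T.ncard < k := by
      intro T hT hTf
      by_contra hge
      rw [not_lt] at hge
      obtain ⟨T', hT'sub, hT'card⟩ := Set.exists_subset_card_eq hge
      have hT'f : T'.Finite := hTf.subset hT'sub
      set W := hT'f.toFinset with hWdef
      have hsubW : T' ⊆ ↑(s (op W)).1 := by
        intro t ht
        have htU : t ∈ U W := hUW W t (by rw [hWdef, Set.Finite.coe_toFinset]; exact ht)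
        exact (hP1 W t htU).1 (hT (hT'sub ht))
      have : k ≤ (s (op W)).1.card := by
        calc k = T'.ncard := hT'card.symm
          _ ≤ ((s (op W)).1 : Set V).ncard := Set.ncard_le_ncard hsubW (Set.toFinite _)
          _ = (s (op W)).1.card := Set.ncard_coe_finset _
      exact absurd (s (op W)).2.2.1 (not_lt.2 this)
    have hfinS : Sset.Finite := by
      by_contra hinf
      obtain ⟨T, hTsub, hTf, hTcard⟩ := (Set.Infinite.exists_subset_ncard_eq hinf k)
      exact absurd (hsmall T hTsub hTf) (by rw [hTcard]; exact lt_irrefl k)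
    have hsepS : Sep G A B Sset := by
      intro u v hu hv w
      set W := w.support.toFinset with hWdef
      have hsupp : ∀ t ∈ w.support, t ∈ U W :=
        fun t ht => hUW W t (by rw [hWdef, List.coe_toFinset]; exact ht)
      obtain ⟨t, htS, htw⟩ := (s (op W)).2.2.2 hu hv w hsupp
      exact ⟨t, (hP1 W t (hsupp t htw)).2 htS, htw⟩
    exact absurd (hsep Sset hfinS hsepS) (not_le.2 (hsmall Sset subset_rfl hfinS))

end MengerAux

/-- `G` is `k`-connected: it has more than `k` vertices and deleting any set
of fewer than `k` vertices leaves it connected. -/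
def KConnected {V : Type*} (G : SimpleGraph V) (k : ℕ) : Prop :=
  (∃ f : Fin (k + 1) → V, Function.Injective f) ∧
    ∀ S : Set V, S.Finite → S.ncard < k → (G.induce Sᶜ).Connected

/-- Menger's theorem, linkage form: in a `k`-connected graph, between any two
sets of `k` vertices there are `k` pairwise vertex-disjoint paths. -/
theorem menger_linkage {V : Type*} (G : SimpleGraph V) (k : ℕ) (hk : 1 ≤ k)
    (hG : KConnected G k) (A B : Set V) (hA : A.ncard = k) (hB : B.ncard = k) :
    ∃ (a b : Fin k → V) (p : ∀ i, G.Walk (a i) (b i)),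
      (∀ i, a i ∈ A) ∧ (∀ i, b i ∈ B) ∧ (∀ i, (p i).IsPath) ∧
      ∀ i j, i ≠ j → ∀ v ∈ (p i).support, v ∉ (p j).support := by
  classical
  have hAf : A.Finite := by
    by_contra h
    rw [Set.Infinite.ncard h] at hA
    omega
  have hBf : B.Finite := by
    by_contra h
    rw [Set.Infinite.ncard h] at hB
    omega
  have hsep : ∀ S : Set V, S.Finite → MengerAux.Sep G A B S → k ≤ S.ncard := by
    intro S hSf hSsep
    by_contra hlt
    rw [not_le] at hlt
    have hconn := hG.2 S hSf hlt
    have hAS : ¬A ⊆ S := by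
      intro hsub
      have := Set.ncard_le_ncard hsub hSf
      omega
    have hBS : ¬B ⊆ S := by
      intro hsub
      have := Set.ncard_le_ncard hsub hSf
      omega
    obtain ⟨a, haA, haS⟩ := Set.not_subset.1 hAS
    obtain ⟨b, hbB, hbS⟩ := Set.not_subset.1 hBS
    obtain ⟨w⟩ := hconn.preconnected ⟨a, haS⟩ ⟨b, hbS⟩
    obtain ⟨t, htS, htsupp⟩ :=
      hSsep haA hbB (w.map (SimpleGraph.Embedding.induce Sᶜ).toHom)
    change t ∈ (w.map (SimpleGraph.Embedding.induce Sᶜ).toHom).support at htsupp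
    rw [SimpleGraph.Walk.support_map, List.mem_map] at htsupp
    obtain ⟨z, _, rfl⟩ := htsupp
    exact z.2 htS
  obtain ⟨a, b, p, ha, hb, hd⟩ := MengerAux.menger_general G A B k hAf hBf hsep
  exact ⟨a, b, fun i => (p i).bypass, ha, hb, fun i => (p i).bypass_isPath,
    fun i j hij v hv hv' => hd i j hij v ((p i).support_bypass_subset hv)
      ((p j).support_bypass_subset hv')⟩
end
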